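/- Consider the 2×2 game with payoff matrices a = [[2,0],[4,1]] and b = [[2,1],[4,3]]. The set of dependency equilibria D = { P ∈ ℝ^{2×2} : all p_{ij} > 0, p_{11}+p_{12}+p_{21}+p_{22} = 1, f_1(P) = 0, f_2(P) = 0 }, equipped with the subspace topology from ℝ⁴, has exactly two connected components. -/

import Mathlib

/-- The set of dependency equilibria of the `2 × 2` game with payoff matrices
`a = [[2,0],[4,1]]` and `b = [[2,1],[4,3]]`, as a subset of `ℝ⁴`. -/
def disconnectedGameEquilibria : Set (ℝ × ℝ × ℝ × ℝ) :=
  {P | (0 < P.1 ∧ 0 < P.2.1 ∧ 0 < P.2.2.1 ∧ 0 < P.2.2.2) ∧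
       P.1 + P.2.1 + P.2.2.1 + P.2.2.2 = 1 ∧
       (P.1 + P.2.1) * (4 * P.2.2.1 + 1 * P.2.2.2)
         - (2 * P.1 + 0 * P.2.1) * (P.2.2.1 + P.2.2.2) = 0 ∧
       (P.1 + P.2.2.1) * (1 * P.2.1 + 3 * P.2.2.2)
         - (2 * P.1 + 4 * P.2.2.1) * (P.2.1 + P.2.2.2) = 0}

noncomputable section
namespace DGE
open Set Function

def Bf (t : ℝ) : ℝ := 1 + t + 6*t^2
def Df (t : ℝ) : ℝ := 36*t^4 + 44*t^3 + 5*t^2 - 2*t + 1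
def rf (t : ℝ) : ℝ := Real.sqrt (Df t)
def gf (P : ℝ × ℝ × ℝ × ℝ) : ℝ :=
  2*P.2.1*P.2.2.2 + 8*P.2.1*P.2.2.1 - P.2.2.2^2 - P.2.2.1*P.2.2.2 - 6*P.2.2.1^2
def sf (u t : ℝ) : ℝ := (Bf t + u)/(2*(1-2*t)) + (Bf t + u)/(2*(1+4*t)) + t + 1
def phi (u t : ℝ) : ℝ × ℝ × ℝ × ℝ :=
  ((Bf t + u)/(2*(1-2*t)) / sf u t, (Bf t + u)/(2*(1+4*t)) / sf u t, t / sf u t, 1 / sf u t)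
/-- the branch parametrizations, e = ±1 -/
def psi (e : ℝ) (t : ℝ) : ℝ × ℝ × ℝ × ℝ := phi (e * rf t) t

lemma Df_pos {t : ℝ} (h0 : 0 < t) : 0 < Df t := by
  unfold Df; nlinarith [sq_nonneg t, sq_nonneg (t-1/9), sq_nonneg (6*t-1), sq_nonneg (t*(6*t-1))]

lemma Bf_pos {t : ℝ} (h0 : 0 < t) : 0 < Bf t := by unfold Bf; nlinarith

lemma rf_pos {t : ℝ} (h0 : 0 < t) : 0 < rf t := Real.sqrt_pos.mpr (Df_pos h0)

lemma rf_sq {t : ℝ} (h0 : 0 < t) : rf t ^ 2 = Df t := Real.sq_sqrt (Df_pos h0).le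

lemma rf_lt_Bf {t : ℝ} (h0 : 0 < t) (h1 : t < 1/2) : rf t < Bf t := by
  rw [rf, show Bf t = Real.sqrt ((Bf t)^2) from (Real.sqrt_sq (Bf_pos h0).le).symm]
  apply Real.sqrt_lt_sqrt (Df_pos h0).le
  unfold Bf Df; nlinarith

lemma K_pos {e t : ℝ} (he : e = 1 ∨ e = -1) (h0 : 0 < t) (h1 : t < 1/2) :
    0 < Bf t + e * rf t := by
  have h2 := rf_lt_Bf h0 h1
  have h3 := rf_pos h0
  rcases he with rfl | rfl <;> nlinarith

lemma sf_pos {u t : ℝ} (h0 : 0 < t) (h1 : t < 1/2) (hK : 0 < Bf t + u) : 0 < sf u t := by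
  unfold sf
  have d1 : (0:ℝ) < 2*(1-2*t) := by linarith
  have d2 : (0:ℝ) < 2*(1+4*t) := by linarith
  positivity

lemma phi_mem {u t : ℝ} (h0 : 0 < t) (h1 : t < 1/2) (hu : u^2 = Df t) (hK : 0 < Bf t + u) :
    phi u t ∈ disconnectedGameEquilibria ∧ gf (phi u t) = u / (sf u t)^2 := by
  have d1 : (0:ℝ) < 2*(1-2*t) := by linarith
  have d2 : (0:ℝ) < 2*(1+4*t) := by linarith
  have hs : 0 < sf u t := sf_pos h0 h1 hK
  have hs' : sf u t ≠ 0 := hs.ne'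
  have hd1 : (2*(1-2*t)) ≠ 0 := d1.ne'
  have hd2 : (2*(1+4*t)) ≠ 0 := d2.ne'
  have h12 : (1:ℝ) - t*2 ≠ 0 := (by linarith : (0:ℝ) < 1-t*2).ne'
  have key1 : (Bf t + u)/(2*(1+4*t)) * (1+4*t) - (Bf t + u)/(2*(1-2*t)) * (1-2*t) = 0 := by
    rw [← div_div, ← div_div, div_mul_cancel₀ _ (by linarith : (0:ℝ) < 1+4*t).ne',
      div_mul_cancel₀ _ (by linarith : (0:ℝ) < 1-2*t).ne', sub_self]
  have key2 : (Bf t + u)/(2*(1-2*t)) * (1 - (Bf t + u)/(2*(1+4*t)))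
      - t*(3*((Bf t + u)/(2*(1+4*t))) + 1) = 0 := by
    unfold Df at hu
    unfold Bf
    field_simp
    linear_combination (-1)*hu
  have keyg : 2*((Bf t + u)/(2*(1+4*t)))*(1+4*t) - Bf t = u := by
    field_simp; ring
  refine ⟨⟨⟨?_, ?_, ?_, ?_⟩, ?_, ?_, ?_⟩, ?_⟩
  · exact div_pos (div_pos hK d1) hs
  · exact div_pos (div_pos hK d2) hs
  · exact div_pos h0 hs
  · exact div_pos one_pos hs
  · show _ + _ + _ + _ = 1
    simp only [phi, ← add_div]
    rw [div_eq_one_iff_eq hs']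
    unfold sf; ring
  · show _ - _ = 0
    simp only [phi]
    linear_combination ((sf u t)⁻¹)^2 * key1
  · show _ - _ = 0
    simp only [phi]
    linear_combination ((sf u t)⁻¹)^2 * key2
  · simp only [gf, phi]
    simp only [Bf] at keyg ⊢
    linear_combination ((sf u t)⁻¹)^2 * keyg

lemma param_of_mem {P : ℝ × ℝ × ℝ × ℝ} (hP : P ∈ disconnectedGameEquilibria) :
    ∃ t u : ℝ, 0 < t ∧ t < 1/2 ∧ u^2 = Df t ∧ 0 < Bf t + u ∧
      P = phi u t ∧ gf P = u * P.2.2.2^2 := by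
  obtain ⟨x, y, z, w⟩ := P
  obtain ⟨⟨hx, hy, hz, hw⟩, hsum, hf1, hf2⟩ := hP
  simp only at hx hy hz hw hsum hf1 hf2 ⊢
  have h1 : x*(w - 2*z) = y*(w + 4*z) := by linear_combination -hf1
  have hwz : 2*z < w := by nlinarith [mul_pos hy (by linarith : (0:ℝ) < w + 4*z)]
  have hw0 : w ≠ 0 := hw.ne'
  have hx0 : x ≠ 0 := hx.ne'
  have hwz0 : w - 2*z ≠ 0 := by linarith
  set t : ℝ := z / w with ht
  set u : ℝ := gf (x, y, z, w) / w^2 with hudef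
  have ht0 : 0 < t := div_pos hz hw
  have ht1 : t < 1/2 := by rw [ht, div_lt_iff₀ hw]; linarith
  have hxC : x * (y*(w+4*z)*(w-y) - z*(3*y+w)*(w-2*z)) = 0 := by
    linear_combination ((w-2*z)*x)*hf2 + (x*(w-y))*hf1
  have hC : y*(w+4*z)*(w-y) - z*(3*y+w)*(w-2*z) = 0 :=
    (mul_eq_zero.mp hxC).resolve_left hx0
  have hg2 : (gf (x, y, z, w))^2 = 36*z^4+44*z^3*w+5*z^2*w^2-2*z*w^3+w^4 := by
    simp only [gf]
    linear_combination (-4*(w+4*z))*hC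
  have hu2 : u^2 = Df t := by
    rw [hudef, ht]
    unfold Df
    field_simp
    linear_combination hg2
  have hKey : Bf t + u = 2*(1+4*t)*(y/w) := by
    rw [hudef, ht]
    unfold Bf gf
    field_simp
    ring
  have hK : 0 < Bf t + u := by
    rw [hKey]
    have : (0:ℝ) < 1 + 4*t := by linarith
    positivity
  have ha0 : (2*(1-2*t)) ≠ 0 := by
    have : (0:ℝ) < 1 - 2*t := by linarith
    positivity
  have hb0 : (2*(1+4*t)) ≠ 0 := by
    have : (0:ℝ) < 1 + 4*t := by linarith
    positivity
  have hY : (Bf t + u)/(2*(1+4*t)) = y/w := by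
    rw [hKey]; field_simp
  have hX : (Bf t + u)/(2*(1-2*t)) = x/w := by
    rw [hKey, ht]
    rw [div_eq_div_iff (by rw [← ht]; exact ha0) hw0]
    field_simp
    linear_combination -h1
  have hsval : sf u t = 1/w := by
    unfold sf
    rw [hX, hY, ht]
    field_simp
    linear_combination hsum
  refine ⟨t, u, ht0, ht1, hu2, hK, ?_, ?_⟩
  · simp only [phi, hsval, hX, hY]
    rw [ht]
    field_simp
  · rw [hudef]; field_simp

lemma continuous_gf : Continuous gf := by unfold gf; fun_prop

lemma gf_ne_zero {P : ℝ × ℝ × ℝ × ℝ} (hP : P ∈ disconnectedGameEquilibria) : gf P ≠ 0 := by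
  obtain ⟨t, u, ht0, ht1, hu2, hK, hphi, hg⟩ := param_of_mem hP
  have hu0 : u ≠ 0 := by
    intro h; rw [h] at hu2; exact absurd hu2.symm (ne_of_gt (by simpa using Df_pos ht0))
  have hw : 0 < P.2.2.2 := hP.1.2.2.2
  rw [hg]
  positivity

/-- the branch sets -/
def branch (e : ℝ) : Set (ℝ × ℝ × ℝ × ℝ) :=
  disconnectedGameEquilibria ∩ {P | 0 < e * gf P}

lemma branch_eq_image {e : ℝ} (he : e = 1 ∨ e = -1) :
    branch e = psi e '' (Set.Ioo 0 (1/2:ℝ)) := by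
  have hee : e * e = 1 := by rcases he with rfl | rfl <;> norm_num
  ext P
  constructor
  · rintro ⟨hP, hgP⟩
    obtain ⟨t, u, ht0, ht1, hu2, hK, hphi, hg⟩ := param_of_mem hP
    have hw : 0 < P.2.2.2 := hP.1.2.2.2
    have hgP' : 0 < e * (u * P.2.2.2^2) := by rw [← hg]; exact hgP
    have heu : 0 < e * u := by nlinarith [mul_pos hw hw]
    have heu2 : (e*u)^2 = Df t := by
      have : (e*u)^2 = (e*e) * u^2 := by ring
      rw [this, hee, one_mul, hu2]
    have hrf : rf t = e * u := by rw [rf, ← heu2, Real.sqrt_sq heu.le]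
    refine ⟨t, ⟨ht0, ht1⟩, ?_⟩
    unfold psi
    rw [hrf, show e * (e * u) = (e*e) * u by ring, hee, one_mul]
    exact hphi.symm
  · rintro ⟨t, ⟨ht0, ht1⟩, rfl⟩
    have hu : (e * rf t)^2 = Df t := by
      have : (e * rf t)^2 = (e*e) * (rf t)^2 := by ring
      rw [this, hee, one_mul, rf_sq ht0]
    have hK := K_pos he ht0 ht1
    obtain ⟨hmem, hgval⟩ := phi_mem ht0 ht1 hu hK
    refine ⟨hmem, ?_⟩
    show 0 < e * gf (psi e t)
    unfold psi
    rw [hgval, show e * (e * rf t / sf (e * rf t) t ^ 2)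
        = (e*e) * rf t / sf (e * rf t) t ^ 2 by ring, hee, one_mul]
    have := sf_pos ht0 ht1 hK
    have := rf_pos ht0
    positivity

lemma psi_continuousOn {e : ℝ} (he : e = 1 ∨ e = -1) :
    ContinuousOn (psi e) (Set.Ioo 0 (1/2:ℝ)) := by
  have hrf : Continuous rf := by
    unfold rf Df; exact Real.continuous_sqrt.comp (by fun_prop)
  have hK : Continuous fun t : ℝ => Bf t + e * rf t := by
    unfold Bf; fun_prop
  have hKpos : ∀ t ∈ Set.Ioo (0:ℝ) (1/2:ℝ), 0 < Bf t + e * rf t := fun t ht =>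
    K_pos he ht.1 ht.2
  have ha : ∀ t ∈ Set.Ioo (0:ℝ) (1/2:ℝ), (2*(1-2*t):ℝ) ≠ 0 := fun t ht =>
    ne_of_gt (by nlinarith [ht.2])
  have hb : ∀ t ∈ Set.Ioo (0:ℝ) (1/2:ℝ), (2*(1+4*t):ℝ) ≠ 0 := fun t ht =>
    ne_of_gt (by nlinarith [ht.1])
  have hXc : ContinuousOn (fun t => (Bf t + e * rf t)/(2*(1-2*t))) (Set.Ioo 0 (1/2:ℝ)) :=
    ContinuousOn.div hK.continuousOn (by fun_prop) ha
  have hYc : ContinuousOn (fun t => (Bf t + e * rf t)/(2*(1+4*t))) (Set.Ioo 0 (1/2:ℝ)) :=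
    ContinuousOn.div hK.continuousOn (by fun_prop) hb
  have hsc : ContinuousOn (fun t => sf (e * rf t) t) (Set.Ioo 0 (1/2:ℝ)) := by
    unfold sf
    exact ((hXc.add hYc).add continuousOn_id).add continuousOn_const
  have hsne : ∀ t ∈ Set.Ioo (0:ℝ) (1/2:ℝ), sf (e * rf t) t ≠ 0 := fun t ht =>
    (sf_pos ht.1 ht.2 (hKpos t ht)).ne'
  unfold psi phi
  exact (hXc.div hsc hsne).prodMk ((hYc.div hsc hsne).prodMk
    ((continuousOn_id.div hsc hsne).prodMk (continuousOn_const.div hsc hsne)))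

lemma branch_preconnected {e : ℝ} (he : e = 1 ∨ e = -1) : IsPreconnected (branch e) := by
  rw [branch_eq_image he]
  exact isPreconnected_Ioo.image _ (psi_continuousOn he)

lemma branch_nonempty {e : ℝ} (he : e = 1 ∨ e = -1) : (branch e).Nonempty := by
  rw [branch_eq_image he]
  exact ⟨_, ⟨(1/4 : ℝ), by norm_num, rfl⟩⟩

end DGE

open DGE

/-- The set of dependency equilibria of the `2 × 2` game with
payoff matrices `a = [[2,0],[4,1]]` and `b = [[2,1],[4,3]]`, with the subspace
topology from `ℝ⁴`, has exactly two connected components. -/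
theorem disconnected_game_two_components :
    Nat.card (ConnectedComponents ↥disconnectedGameEquilibria) = 2 := by
  classical
  set T := ↥disconnectedGameEquilibria
  -- the sign function
  let f : T → Bool := fun p => decide (0 < gf p.val)
  have hfiber_true : f ⁻¹' {true} = {p : T | 0 < gf p.val} := by
    ext p; simp [f]
  have hfiber_false : f ⁻¹' {false} = {p : T | 0 < (-1) * gf p.val} := by
    ext p
    have h := gf_ne_zero p.2
    simp only [Set.mem_preimage, Set.mem_singleton_iff, Set.mem_setOf_eq, f,
      decide_eq_false_iff_not, not_lt]
    constructor
    · intro hle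
      have : gf p.val < 0 := lt_of_le_of_ne hle h
      linarith
    · intro hlt; nlinarith
  have hopen_pos : IsOpen {p : T | 0 < gf p.val} :=
    (isOpen_lt continuous_const (continuous_gf.comp continuous_subtype_val))
  have hopen_neg : IsOpen {p : T | 0 < (-1) * gf p.val} := by
    have : {p : T | 0 < (-1) * gf p.val} = {p : T | gf p.val < 0} := by
      ext p; simp only [Set.mem_setOf_eq]; constructor <;> intro <;> linarith
    rw [this]
    exact isOpen_lt (continuous_gf.comp continuous_subtype_val) continuous_const
  have hlc : IsLocallyConstant f := by
    rw [IsLocallyConstant.iff_isOpen_fiber]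
    intro b
    cases b
    · rw [hfiber_false]; exact hopen_neg
    · rw [hfiber_true]; exact hopen_pos
  have hfc : Continuous f := hlc.continuous
  -- preconnectedness of the sign classes inside T
  have hpre : ∀ e : ℝ, (e = 1 ∨ e = -1) →
      IsPreconnected {p : T | 0 < e * gf p.val} := by
    intro e he
    have himg : Subtype.val '' {p : T | 0 < e * gf p.val} = branch e := by
      ext P
      constructor
      · rintro ⟨p, hp, rfl⟩; exact ⟨p.2, hp⟩
      · rintro ⟨hP, hgP⟩; exact ⟨⟨P, hP⟩, hgP, rfl⟩
    have := branch_preconnected he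
    rw [← himg] at this
    exact (Topology.IsInducing.subtypeVal.isPreconnected_image).mp this
  -- the induced map on connected components
  let F : ConnectedComponents T → Bool := hfc.connectedComponentsLift
  have hF : ∀ p : T, F (ConnectedComponents.mk p) = f p := fun p =>
    hfc.connectedComponentsLift_apply_coe p
  have hinj : Function.Injective F := by
    intro c1 c2 hc
    obtain ⟨a, rfl⟩ := ConnectedComponents.surjective_coe c1
    obtain ⟨b, rfl⟩ := ConnectedComponents.surjective_coe c2
    rw [hF, hF] at hc
    have key : ∀ e : ℝ, (e = 1 ∨ e = -1) → 0 < e * gf a.val → 0 < e * gf b.val →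
        (ConnectedComponents.mk a = ConnectedComponents.mk b) := by
      intro e he ha hb
      have hpc := hpre e he
      have hsub := hpc.subset_connectedComponent (ha : a ∈ {p : T | 0 < e * gf p.val})
      have : b ∈ connectedComponent a := hsub hb
      exact (ConnectedComponents.coe_eq_coe' ).mpr (connectedComponent_eq this ▸
        mem_connectedComponent)
    have hga := gf_ne_zero a.2
    have hgb := gf_ne_zero b.2
    rcases lt_or_gt_of_ne hga with hlt | hgt
    · have hfa : f a = false := by simp [f]; linarith
      have hfb : f b = false := by rw [← hc, hfa]
      have hblt : gf b.val < 0 := by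
        by_contra hge
        have : 0 < gf b.val := lt_of_le_of_ne (not_lt.mp hge) (Ne.symm hgb)
        simp [f, this] at hfb
      exact key (-1) (Or.inr rfl) (by linarith) (by linarith)
    · have hfa : f a = true := by simp [f]; linarith
      have hfb : f b = true := by rw [← hc, hfa]
      have hbgt : 0 < gf b.val := by
        by_contra hge
        simp [f, not_lt.mp (fun h => hge h)] at hfb
        exact hge hfb
      exact key 1 (Or.inl rfl) (by linarith) (by simpa using hbgt)
  have hsurj : Function.Surjective F := by
    intro b
    cases b
    · obtain ⟨P, hP⟩ := branch_nonempty (e := -1) (Or.inr rfl)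
      refine ⟨ConnectedComponents.mk ⟨P, hP.1⟩, ?_⟩
      rw [hF]
      have : gf P < 0 := by have := hP.2; simp only [Set.mem_setOf_eq] at this; linarith
      simp [f]; linarith
    · obtain ⟨P, hP⟩ := branch_nonempty (e := 1) (Or.inl rfl)
      refine ⟨ConnectedComponents.mk ⟨P, hP.1⟩, ?_⟩
      rw [hF]
      have : 0 < gf P := by have := hP.2; simp only [Set.mem_setOf_eq] at this; linarith
      simp [f]; linarith
  have := Nat.card_eq_of_bijective F ⟨hinj, hsurj⟩
  rw [this]
  simp
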